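/- Let σ, α, W, v, t > 0, set H = √(αWv/(πσ²)), and define f(x) = max(0, (1/α)·(H√t − |x|²/(2σ²))) for x ∈ ℝ². Then for every measurable g : ℝ² → [0,∞) with ∫_{ℝ²} g(x) dx = Wvt, one has ∫_{ℝ²} (1/(2πσ²))·e^{−|x|²/(2σ²)}·(1 − e^{−α g(x)}) dx ≤ ∫_{ℝ²} (1/(2πσ²))·e^{−|x|²/(2σ²)}·(1 − e^{−α f(x)}) dx. -/

import Mathlib

open MeasureTheory

local notation "E2" => EuclideanSpace ℝ (Fin 2)

private lemma aux_final (p c a ss T ww vv tt : ℝ) (hp : p ≠ 0) (hc : c ≠ 0) (ha : a ≠ 0)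
    (hT : T = ss / a) (hs2 : ss ^ 2 = a * ww * vv / (p * c) * tt) :
    2 * p * c * (ss * T - a * T ^ 2 / 2) = ww * vv * tt := by
  subst hT
  have h : ss ^ 2 * (p * c) = a * ww * vv * tt := by
    field_simp at hs2
    linarith
  field_simp
  linear_combination h


/-- (Example 2, optimality.) For the circular normal target density with
parameter `σ` on `ℝ²` and the homogeneous exponential detection function with rate `α`,
the allocation `f(x) = max(0, (1/α)(H√t − |x|²/(2σ²)))` with `H = √(αWv/(πσ²))` maximizes
the subjective detection probability among all measurable nonnegative allocations of total
effort `Wvt`. -/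
theorem circular_normal_plan_optimal
    (σ α W v t H : ℝ) (hσ : 0 < σ) (hα : 0 < α) (hW : 0 < W) (hv : 0 < v) (ht : 0 < t)
    (hH : H = Real.sqrt (α * W * v / (Real.pi * σ ^ 2)))
    (f : EuclideanSpace ℝ (Fin 2) → ℝ)
    (hf : ∀ x, f x = max 0 (1 / α * (H * Real.sqrt t - ‖x‖ ^ 2 / (2 * σ ^ 2)))) :
    ∀ g : EuclideanSpace ℝ (Fin 2) → ℝ, Measurable g → (∀ x, 0 ≤ g x) →
      (∫ x, g x) = W * v * t →
      ∫ x : EuclideanSpace ℝ (Fin 2),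
          1 / (2 * Real.pi * σ ^ 2) * Real.exp (-(‖x‖ ^ 2) / (2 * σ ^ 2)) *
            (1 - Real.exp (-(α * g x))) ≤
        ∫ x : EuclideanSpace ℝ (Fin 2),
          1 / (2 * Real.pi * σ ^ 2) * Real.exp (-(‖x‖ ^ 2) / (2 * σ ^ 2)) *
            (1 - Real.exp (-(α * f x))) := by
  intro g hgm hg0 hgE
  have hπ : (0:ℝ) < Real.pi := Real.pi_pos
  set s : ℝ := H * Real.sqrt t with hs_def
  have hHpos : 0 < H := by
    rw [hH]
    apply Real.sqrt_pos.2
    positivity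
  have hspos : 0 < s := by
    have := Real.sqrt_pos.2 ht
    positivity
  -- constant and multiplier
  set C : E2 → ℝ := fun x => 1 / (2 * Real.pi * σ ^ 2) * Real.exp (-(‖x‖ ^ 2) / (2 * σ ^ 2))
    with hC_def
  set lam : ℝ := α / (2 * Real.pi * σ ^ 2) * Real.exp (-s) with hlam_def
  have hCpos : ∀ x, 0 < C x := fun x => by
    simp only [hC_def]; positivity
  -- f is nonnegative and continuous with compact support
  have hf0 : ∀ x, 0 ≤ f x := fun x => by rw [hf x]; exact le_max_left _ _
  have hfc : Continuous f := by
    have : f = fun x : E2 => max 0 (1 / α * (s - ‖x‖ ^ 2 / (2 * σ ^ 2))) := funext hf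
    rw [this]; fun_prop
  -- pointwise Lagrangian inequality
  have hpt : ∀ x : E2, C x * (1 - Real.exp (-(α * g x))) ≤
      C x * (1 - Real.exp (-(α * f x))) + lam * (g x - f x) := by
    intro x
    have key : Real.exp (-(α * f x)) * (1 + α * f x - α * g x) ≤ Real.exp (-(α * g x)) := by
      have h1 := Real.add_one_le_exp (α * f x - α * g x)
      have h2 : 0 < Real.exp (-(α * f x)) := Real.exp_pos _
      calc Real.exp (-(α * f x)) * (1 + α * f x - α * g x)
          = (α * f x - α * g x + 1) * Real.exp (-(α * f x)) := by ring
        _ ≤ Real.exp (α * f x - α * g x) * Real.exp (-(α * f x)) := by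
            exact mul_le_mul_of_nonneg_right h1 h2.le
        _ = Real.exp (-(α * g x)) := by rw [← Real.exp_add]; ring_nf
    have step1 : C x * (1 - Real.exp (-(α * g x))) ≤
        C x * (1 - Real.exp (-(α * f x))) +
          C x * Real.exp (-(α * f x)) * α * (g x - f x) := by
      have hC := (hCpos x).le
      nlinarith [key, hCpos x]
    refine step1.trans (add_le_add le_rfl ?_)
    -- show (C x * exp(-(α f x)) * α) * (g x - f x) ≤ lam * (g x - f x)
    set q : ℝ := ‖x‖ ^ 2 / (2 * σ ^ 2) with hq_def
    have hq0 : 0 ≤ q := by positivity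
    have hCq : C x = 1 / (2 * Real.pi * σ ^ 2) * Real.exp (-q) := by
      rw [hC_def, hq_def]; ring_nf
    rcases le_or_gt s q with hcase | hcase
    · -- b = 0
      have hb : f x = 0 := by
        rw [hf x, max_eq_left]
        apply mul_nonpos_of_nonneg_of_nonpos
        · positivity
        · linarith
      rw [hb]
      have h1 : C x * Real.exp (-(α * 0)) * α ≤ lam := by
        rw [hCq, hlam_def]
        have : Real.exp (-q) ≤ Real.exp (-s) := Real.exp_le_exp.2 (by linarith)
        rw [mul_zero, neg_zero, Real.exp_zero, mul_one]
        calc 1 / (2 * Real.pi * σ ^ 2) * Real.exp (-q) * α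
            ≤ 1 / (2 * Real.pi * σ ^ 2) * Real.exp (-s) * α := by
              apply mul_le_mul_of_nonneg_right _ hα.le
              apply mul_le_mul_of_nonneg_left this (by positivity)
          _ = α / (2 * Real.pi * σ ^ 2) * Real.exp (-s) := by ring
      have h2 : 0 ≤ g x - 0 := by simpa using hg0 x
      exact mul_le_mul_of_nonneg_right h1 h2
    · -- b = (1/α)(s - q), multiplier is exact
      have hb : f x = 1 / α * (s - q) := by
        rw [hf x, max_eq_right]
        exact mul_nonneg (by positivity) (by linarith)
      have hab : α * f x = s - q := by
        rw [hb]; field_simp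
      have he : Real.exp (-q) * Real.exp (-(s - q)) = Real.exp (-s) := by
        rw [← Real.exp_add]; ring_nf
      have : C x * Real.exp (-(α * f x)) * α = lam := by
        rw [hab, hCq, hlam_def]
        linear_combination (α / (2 * Real.pi * σ ^ 2)) * he
      rw [this]
  -- integrability of the Gaussian weight
  have hGauss : Integrable (fun x : E2 => Real.exp (-(1 / (2 * σ ^ 2)) * ‖x‖ ^ 2)) := by
    have hb : (0:ℝ) < ((1 / (2 * σ ^ 2) : ℝ) : ℂ).re := by
      simp only [Complex.ofReal_re]; positivity
    have hIC := GaussianFourier.integrable_cexp_neg_mul_sq_norm_add (V := EuclideanSpace ℝ (Fin 2))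
      (b := ((1 / (2 * σ ^ 2) : ℝ) : ℂ)) hb 0 0
    refine hIC.norm.congr (Filter.Eventually.of_forall fun x => ?_)
    have hcast : (-(((1 / (2 * σ ^ 2) : ℝ)) : ℂ) * (‖x‖ : ℂ) ^ 2 +
        0 * ((inner ℝ (0:E2) x : ℝ) : ℂ)) = ((-(1 / (2 * σ ^ 2)) * ‖x‖ ^ 2 : ℝ) : ℂ) := by
      push_cast; ring
    simp only [hcast, Complex.norm_exp, Complex.ofReal_re]
  have hCint : Integrable C := by
    have : C = fun x : E2 =>
        1 / (2 * Real.pi * σ ^ 2) * Real.exp (-(1 / (2 * σ ^ 2)) * ‖x‖ ^ 2) := by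
      funext x; rw [hC_def]; ring_nf
    rw [this]
    exact hGauss.const_mul _
  -- integrability of both integrands
  have hbound : ∀ (h : E2 → ℝ), (∀ x, 0 ≤ h x) →
      ∀ x : E2, ‖C x * (1 - Real.exp (-(α * h x)))‖ ≤ C x := by
    intro h h0 x
    have h1 : Real.exp (-(α * h x)) ≤ 1 := by
      rw [Real.exp_le_one_iff]
      have := h0 x
      nlinarith
    have h2 : 0 ≤ 1 - Real.exp (-(α * h x)) := by linarith
    have h3 : 1 - Real.exp (-(α * h x)) ≤ 1 := by
      have := (Real.exp_pos (-(α * h x))).le; linarith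
    rw [Real.norm_eq_abs, abs_of_nonneg (by positivity)]
    calc C x * (1 - Real.exp (-(α * h x))) ≤ C x * 1 :=
          mul_le_mul_of_nonneg_left h3 (hCpos x).le
      _ = C x := mul_one _
  have hIg : Integrable (fun x : E2 => C x * (1 - Real.exp (-(α * g x)))) := by
    apply Integrable.mono' hCint
    · apply Measurable.aestronglyMeasurable
      fun_prop
    · exact Filter.Eventually.of_forall (hbound g hg0)
  have hIf : Integrable (fun x : E2 => C x * (1 - Real.exp (-(α * f x)))) := by
    apply Integrable.mono' hCint
    · apply Measurable.aestronglyMeasurable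
      have := hfc.measurable
      fun_prop
    · exact Filter.Eventually.of_forall (hbound f hf0)
  -- g is integrable
  have hgint : Integrable g := by
    by_contra hcon
    rw [integral_undef hcon] at hgE
    have : (0:ℝ) < W * v * t := by positivity
    linarith [hgE]
  -- f is integrable (continuous with compact support)
  set R : ℝ := Real.sqrt (2 * σ ^ 2 * s) with hR_def
  have hfsupp : HasCompactSupport f := by
    apply HasCompactSupport.intro (isCompact_closedBall (0:E2) R)
    intro x hx
    simp only [Metric.mem_closedBall, dist_zero_right, not_le] at hx
    have hR0 : 0 ≤ R := Real.sqrt_nonneg _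
    have hx2 : R ^ 2 < ‖x‖ ^ 2 := by nlinarith [norm_nonneg x]
    have hR2 : R ^ 2 = 2 * σ ^ 2 * s := Real.sq_sqrt (by positivity)
    rw [hf x, max_eq_left]
    apply mul_nonpos_of_nonneg_of_nonpos
    · positivity
    · rw [sub_nonpos, le_div_iff₀ (by positivity)]
      nlinarith
  have hfint : Integrable f := hfc.integrable_of_hasCompactSupport hfsupp
  -- compute ∫ f = W v t
  have hfE : (∫ x, f x) = W * v * t := by
    rw [hfint.integral_eq_integral_meas_lt (Filter.Eventually.of_forall hf0)]
    set T : ℝ := s / α with hT_def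
    have hT : 0 < T := by positivity
    have hcongr : ∀ u ∈ Set.Ioi (0:ℝ),
        (volume {a : E2 | u < f a}).toReal =
          Set.indicator (Set.Ioc 0 T) (fun u => 2 * Real.pi * σ ^ 2 * (s - α * u)) u := by
      intro u hu
      have hu0 : 0 < u := hu
      have hset : {a : E2 | u < f a} = Metric.ball (0:E2) (Real.sqrt (2 * σ ^ 2 * (s - α * u))) := by
        ext x
        simp only [Set.mem_setOf_eq, Metric.mem_ball, dist_zero_right]
        rw [Real.lt_sqrt (norm_nonneg x)]
        rw [hf x]
        constructor
        · intro h
          have h2 : u < 1 / α * (s - ‖x‖ ^ 2 / (2 * σ ^ 2)) := by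
            rcases le_or_gt (1 / α * (s - ‖x‖ ^ 2 / (2 * σ ^ 2))) 0 with h1 | h1
            · exact absurd h (by rw [max_eq_left h1]; linarith)
            · rwa [max_eq_right h1.le] at h
          have h3 : α * u < s - ‖x‖ ^ 2 / (2 * σ ^ 2) := by
            have h5 := mul_lt_mul_of_pos_left h2 hα
            rw [show α * (1 / α * (s - ‖x‖ ^ 2 / (2 * σ ^ 2))) =
              s - ‖x‖ ^ 2 / (2 * σ ^ 2) by field_simp] at h5
            exact h5
          have h4 : ‖x‖ ^ 2 / (2 * σ ^ 2) < s - α * u := by linarith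
          calc ‖x‖ ^ 2 = ‖x‖ ^ 2 / (2 * σ ^ 2) * (2 * σ ^ 2) := by field_simp
            _ < (s - α * u) * (2 * σ ^ 2) :=
                mul_lt_mul_of_pos_right h4 (by positivity)
            _ = 2 * σ ^ 2 * (s - α * u) := by ring
        · intro h
          have h4 : α * u < s - ‖x‖ ^ 2 / (2 * σ ^ 2) := by
            have : ‖x‖ ^ 2 / (2 * σ ^ 2) < s - α * u := by
              rw [div_lt_iff₀ (by positivity : (0:ℝ) < 2 * σ ^ 2)]
              nlinarith
            linarith
          have h5 : u < 1 / α * (s - ‖x‖ ^ 2 / (2 * σ ^ 2)) := by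
            calc u = 1 / α * (α * u) := by field_simp
              _ < 1 / α * (s - ‖x‖ ^ 2 / (2 * σ ^ 2)) :=
                  mul_lt_mul_of_pos_left h4 (by positivity)
          exact h5.trans_le (le_max_right _ _)
      rw [hset, EuclideanSpace.volume_ball]
      have hcard : Fintype.card (Fin 2) = 2 := Fintype.card_fin 2
      rw [hcard]
      have hΓ : Real.Gamma ((2:ℕ) / 2 + 1) = 1 := by
        norm_num [Real.Gamma_two]
      have hπ2 : Real.sqrt Real.pi ^ 2 = Real.pi := Real.sq_sqrt hπ.le
      rw [hπ2, hΓ, div_one]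
      set r : ℝ := Real.sqrt (2 * σ ^ 2 * (s - α * u)) with hr_def
      have hr0 : 0 ≤ r := Real.sqrt_nonneg _
      rw [← ENNReal.ofReal_pow hr0, ← ENNReal.ofReal_mul (by positivity),
        ENNReal.toReal_ofReal (by positivity)]
      rcases le_or_gt u T with hle | hgt
      · have hmem : u ∈ Set.Ioc 0 T := ⟨hu0, hle⟩
        rw [Set.indicator_of_mem hmem]
        have hnn : 0 ≤ s - α * u := by
          rw [hT_def, le_div_iff₀ hα] at hle
          linarith [mul_comm u α]
        have : r ^ 2 = 2 * σ ^ 2 * (s - α * u) := Real.sq_sqrt (by positivity)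
        rw [this]; ring
      · rw [Set.indicator_of_notMem (by simp [Set.mem_Ioc]; intro _; linarith)]
        have hneg : 2 * σ ^ 2 * (s - α * u) < 0 := by
          rw [hT_def, div_lt_iff₀ hα] at hgt
          have h6 : s - α * u < 0 := by nlinarith
          apply mul_neg_of_pos_of_neg (by positivity) h6
        have : r = 0 := Real.sqrt_eq_zero_of_nonpos hneg.le
        rw [this]; ring
    simp only [measureReal_def]
    rw [setIntegral_congr_fun measurableSet_Ioi hcongr]
    rw [setIntegral_indicator measurableSet_Ioc]
    have hinter : Set.Ioi 0 ∩ Set.Ioc 0 T = Set.Ioc 0 T := by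
      apply Set.inter_eq_right.2
      exact fun u hu => hu.1
    rw [hinter]
    rw [← intervalIntegral.integral_of_le hT.le]
    have hcalc : (∫ u in (0:ℝ)..T, 2 * Real.pi * σ ^ 2 * (s - α * u)) =
        2 * Real.pi * σ ^ 2 * (s * T - α * T ^ 2 / 2) := by
      rw [intervalIntegral.integral_const_mul]
      congr 1
      rw [intervalIntegral.integral_sub intervalIntegrable_const
        (intervalIntegral.intervalIntegrable_id.const_mul α)]
      rw [intervalIntegral.integral_const, intervalIntegral.integral_const_mul,
        integral_id, smul_eq_mul]
      ring
    rw [hcalc]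
    -- arithmetic
    have hs2 : s ^ 2 = α * W * v / (Real.pi * σ ^ 2) * t := by
      rw [hs_def, mul_pow, Real.sq_sqrt ht.le, hH, Real.sq_sqrt (by positivity)]
    exact aux_final Real.pi (σ ^ 2) α s T W v t hπ.ne' (by positivity) hα.ne' hT_def hs2
  -- assemble
  have hI2 : Integrable (fun x : E2 => lam * (g x - f x)) := by
    exact (hgint.sub hfint).const_mul lam
  calc (∫ x, C x * (1 - Real.exp (-(α * g x))))
      ≤ ∫ x, (C x * (1 - Real.exp (-(α * f x))) + lam * (g x - f x)) := by
        apply integral_mono hIg (hIf.add hI2) hpt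
    _ = (∫ x, C x * (1 - Real.exp (-(α * f x)))) + lam * ((∫ x, g x) - ∫ x, f x) := by
        rw [integral_add hIf hI2, integral_const_mul, integral_sub hgint hfint]
    _ = ∫ x, C x * (1 - Real.exp (-(α * f x))) := by
        rw [hgE, hfE]; ring
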